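/- (Laplace integral of x^a (log x)^l.) Let l ∈ ℕ, a ∈ ℂ with Re a > −1, and z ∈ ℂ with Re z > 0. Then ∫_{x ∈ (0,∞)} x^a · (log x)^l · exp(−z·x) dx equals the l-th iterated derivative, evaluated at a, of the function w ↦ Γ(w+1) · z^{−w−1} (so in particular for l = 1 it equals z^{−a−1}·(Γ'(a+1) − Γ(a+1)·log z), with the principal branch of log). -/

import Mathlib

open MeasureTheory Complex

set_option maxHeartbeats 1000000

section LaplaceAux
open Set Filter

lemma laplace_log_bound_small {x ε : ℝ} (hx : 0 < x) (hx1 : x ≤ 1) (hε : 0 < ε) :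
    |Real.log x| ≤ ε⁻¹ * x ^ (-ε) := by
  have h0 : Real.log x ≤ 0 := Real.log_nonpos hx.le hx1
  rw [abs_of_nonpos h0]
  have hinv : (x⁻¹ : ℝ) ^ ε = x ^ (-ε) := by
    rw [Real.inv_rpow hx.le, ← Real.rpow_neg hx.le]
  have h1 : -Real.log x = ε⁻¹ * Real.log ((x⁻¹) ^ ε) := by
    rw [Real.log_rpow (by positivity), Real.log_inv]
    field_simp
  have h2 : Real.log ((x⁻¹) ^ ε) ≤ (x⁻¹) ^ ε := by
    have := Real.log_le_sub_one_of_pos (x := (x⁻¹) ^ ε) (by positivity)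
    linarith
  rw [h1, ← hinv]
  have hεinv : (0:ℝ) ≤ ε⁻¹ := by positivity
  exact mul_le_mul_of_nonneg_left h2 hεinv

lemma laplace_aux_integrable (t : ℝ) (ht : -1 < t) (m : ℕ) (c : ℝ) (hc : 0 < c) :
    IntegrableOn (fun x : ℝ => x ^ t * |Real.log x| ^ m * Real.exp (-c * x)) (Ioi 0) := by
  set ε : ℝ := (t + 1) / (2 * (m + 1)) with hεdef
  have hε0 : 0 < ε := div_pos (by linarith) (by positivity)
  have hεm : ε * m < (t + 1) / 2 := by
    rw [hεdef, div_mul_eq_mul_div, div_lt_div_iff₀ (by positivity) (by norm_num)]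
    nlinarith [hε0, ht]
  have h1 : IntegrableOn (fun x : ℝ => x ^ (t - ε * m) * Real.exp (-c * x)) (Ioi 0) := by
    have := integrableOn_rpow_mul_exp_neg_mul_rpow (s := t - ε * m) (p := 1)
      (by linarith) one_pos hc
    exact this.congr_fun (fun x hx => by simp only [Real.rpow_one]) measurableSet_Ioi
  have h2 : IntegrableOn (fun x : ℝ => x ^ (t + m) * Real.exp (-c * x)) (Ioi 0) := by
    have := integrableOn_rpow_mul_exp_neg_mul_rpow (s := t + m) (p := 1)
      (by have := Nat.cast_nonneg (α := ℝ) m; linarith) one_pos hc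
    exact this.congr_fun (fun x hx => by simp only [Real.rpow_one]) measurableSet_Ioi
  have hsum := (h1.const_mul (ε⁻¹ ^ m)).add h2
  refine hsum.mono' ?_ ?_
  · have hcont1 : ContinuousOn (fun x : ℝ => x ^ t) (Ioi 0) := fun x hx =>
      (Real.continuousAt_rpow_const x t (Or.inl (ne_of_gt hx))).continuousWithinAt
    have hcont2 : ContinuousOn (fun x : ℝ => |Real.log x| ^ m) (Ioi 0) := fun x hx =>
      (((Real.continuousAt_log (ne_of_gt hx)).abs).pow m).continuousWithinAt
    have hcont3 : ContinuousOn (fun x : ℝ => Real.exp (-c * x)) (Ioi 0) :=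
      (by fun_prop : Continuous fun x : ℝ => Real.exp (-c * x)).continuousOn
    exact ((hcont1.mul hcont2).mul hcont3).aestronglyMeasurable measurableSet_Ioi
  · filter_upwards [ae_restrict_mem measurableSet_Ioi] with x hx
    rw [mem_Ioi] at hx
    have hexp : (0:ℝ) ≤ Real.exp (-c * x) := (Real.exp_pos _).le
    have hxt : (0:ℝ) ≤ x ^ t := Real.rpow_nonneg hx.le _
    simp only [Pi.add_apply]
    rw [Real.norm_eq_abs, _root_.abs_of_nonneg (by positivity)]
    rcases le_total x 1 with hx1 | hx1
    · have hlog : |Real.log x| ^ m ≤ ε⁻¹ ^ m * x ^ (-(ε * m)) := by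
        calc |Real.log x| ^ m ≤ (ε⁻¹ * x ^ (-ε)) ^ m :=
              pow_le_pow_left₀ (abs_nonneg _) (laplace_log_bound_small hx hx1 hε0) m
          _ = ε⁻¹ ^ m * x ^ (-(ε * m)) := by
              rw [mul_pow, ← Real.rpow_natCast (x ^ (-ε)) m, ← Real.rpow_mul hx.le]
              ring_nf
      have key : x ^ t * |Real.log x| ^ m * Real.exp (-c * x)
          ≤ ε⁻¹ ^ m * (x ^ (t - ε * m) * Real.exp (-c * x)) := by
        calc x ^ t * |Real.log x| ^ m * Real.exp (-c * x)
            ≤ x ^ t * (ε⁻¹ ^ m * x ^ (-(ε * m))) * Real.exp (-c * x) := by gcongr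
          _ = ε⁻¹ ^ m * (x ^ (t - ε * m) * Real.exp (-c * x)) := by
              rw [sub_eq_add_neg, Real.rpow_add hx]; ring
      have h2nn : (0:ℝ) ≤ x ^ (t + m) * Real.exp (-c * x) := by positivity
      linarith
    · have hlog : |Real.log x| ^ m ≤ x ^ (m : ℝ) := by
        calc |Real.log x| ^ m ≤ x ^ m := by
              refine pow_le_pow_left₀ (abs_nonneg _) ?_ m
              rw [_root_.abs_of_nonneg (Real.log_nonneg hx1)]
              have := Real.log_le_sub_one_of_pos hx
              linarith
          _ = x ^ (m : ℝ) := (Real.rpow_natCast x m).symm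
      have key : x ^ t * |Real.log x| ^ m * Real.exp (-c * x)
          ≤ x ^ (t + m) * Real.exp (-c * x) := by
        calc x ^ t * |Real.log x| ^ m * Real.exp (-c * x)
            ≤ x ^ t * x ^ (m : ℝ) * Real.exp (-c * x) := by gcongr
          _ = x ^ (t + m) * Real.exp (-c * x) := by rw [← Real.rpow_add hx]
      have h1nn : (0:ℝ) ≤ ε⁻¹ ^ m * (x ^ (t - ε * m) * Real.exp (-c * x)) := by positivity
      linarith

lemma laplace_norm_integrand (w z : ℂ) (l : ℕ) {x : ℝ} (hx : 0 < x) :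
    ‖(x : ℂ) ^ w * (Real.log x : ℂ) ^ l * Complex.exp (-(z * x))‖
      = x ^ w.re * |Real.log x| ^ l * Real.exp (-z.re * x) := by
  rw [norm_mul, norm_mul, Complex.norm_cpow_eq_rpow_re_of_pos hx, norm_pow, Complex.norm_real, Real.norm_eq_abs,
    Complex.norm_exp]
  congr 2
  simp [Complex.neg_re, Complex.mul_re]

lemma laplace_meas (w z : ℂ) (l : ℕ) :
    AEStronglyMeasurable (fun x : ℝ => (x : ℂ) ^ w * (Real.log x : ℂ) ^ l * Complex.exp (-(z * x)))
      (volume.restrict (Ioi 0)) := by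
  have hcont : ContinuousOn
        (fun x : ℝ => (x : ℂ) ^ w * (Real.log x : ℂ) ^ l * Complex.exp (-(z * x))) (Ioi 0) := by
    refine ContinuousOn.mul (ContinuousOn.mul ?_ ?_) ?_
    · intro x hx
      exact (Complex.continuousAt_ofReal_cpow_const x w (Or.inr (ne_of_gt hx))).continuousWithinAt
    · intro x hx
      exact ((Complex.continuous_ofReal.continuousAt.comp
        (Real.continuousAt_log (ne_of_gt hx))).pow l).continuousWithinAt
    · exact ((Complex.continuous_exp.comp
        ((continuous_const.mul Complex.continuous_ofReal).neg))).continuousOn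
  exact hcont.aestronglyMeasurable measurableSet_Ioi

lemma laplace_integrable_integrand (w z : ℂ) (l : ℕ) (hw : -1 < w.re) (hz : 0 < z.re) :
    IntegrableOn (fun x : ℝ => (x : ℂ) ^ w * (Real.log x : ℂ) ^ l * Complex.exp (-(z * x)))
      (Ioi 0) := by
  refine (laplace_aux_integrable w.re hw l z.re hz).mono' (laplace_meas w z l) ?_
  · filter_upwards [ae_restrict_mem measurableSet_Ioi] with x hx
    rw [mem_Ioi] at hx
    rw [laplace_norm_integrand w z l hx]

lemma laplace_hasDerivAt_F (l : ℕ) (z : ℂ) (hz : 0 < z.re) {a : ℂ} (ha : -1 < a.re) :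
    HasDerivAt
      (fun w : ℂ => ∫ x in Ioi (0:ℝ), (x : ℂ) ^ w * (Real.log x : ℂ) ^ l * Complex.exp (-(z * x)))
      (∫ x in Ioi (0:ℝ), (x : ℂ) ^ a * (Real.log x : ℂ) ^ (l + 1) * Complex.exp (-(z * x))) a := by
  set ε : ℝ := (a.re + 1) / 2 with hεdef
  have hε0 : 0 < ε := by rw [hεdef]; linarith
  have hp : (-1 : ℝ) < a.re - ε := by rw [hεdef]; linarith
  have hq : (-1 : ℝ) < a.re + ε := by linarith
  have key := hasDerivAt_integral_of_dominated_loc_of_deriv_le (μ := volume.restrict (Ioi 0))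
    (F := fun (w : ℂ) (x : ℝ) => (x : ℂ) ^ w * (Real.log x : ℂ) ^ l * Complex.exp (-(z * x)))
    (F' := fun (w : ℂ) (x : ℝ) => (x : ℂ) ^ w * (Real.log x : ℂ) ^ (l + 1) * Complex.exp (-(z * x)))
    (x₀ := a) (s := Metric.ball a ε)
    (bound := fun x : ℝ => x ^ (a.re - ε) * |Real.log x| ^ (l + 1) * Real.exp (-z.re * x)
      + x ^ (a.re + ε) * |Real.log x| ^ (l + 1) * Real.exp (-z.re * x))
    (Metric.ball_mem_nhds _ hε0) ?_ ?_ ?_ ?_ ?_ ?_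
  · exact key.2
  · filter_upwards with w using laplace_meas w z l
  · exact laplace_integrable_integrand a z l ha hz
  · exact (laplace_integrable_integrand a z (l + 1) ha hz).aestronglyMeasurable
  · filter_upwards [ae_restrict_mem measurableSet_Ioi] with x hx
    rw [mem_Ioi] at hx
    intro w hw
    rw [Metric.mem_ball, Complex.dist_eq] at hw
    have hre : |w.re - a.re| < ε := by
      calc |w.re - a.re| = |(w - a).re| := by rw [Complex.sub_re]
        _ ≤ ‖w - a‖ := Complex.abs_re_le_norm _
        _ < ε := hw
    rw [abs_lt] at hre
    rw [laplace_norm_integrand w z (l + 1) hx]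
    have hbase : x ^ w.re ≤ x ^ (a.re - ε) + x ^ (a.re + ε) := by
      rcases le_total x 1 with hx1 | hx1
      · have h1 : x ^ w.re ≤ x ^ (a.re - ε) :=
          Real.rpow_le_rpow_of_exponent_ge hx hx1 (by linarith)
        have h2 : (0:ℝ) ≤ x ^ (a.re + ε) := Real.rpow_nonneg hx.le _
        linarith
      · have h1 : x ^ w.re ≤ x ^ (a.re + ε) :=
          Real.rpow_le_rpow_of_exponent_le hx1 (by linarith)
        have h2 : (0:ℝ) ≤ x ^ (a.re - ε) := Real.rpow_nonneg hx.le _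
        linarith
    have hl : (0:ℝ) ≤ |Real.log x| ^ (l + 1) := by positivity
    have he : (0:ℝ) ≤ Real.exp (-z.re * x) := (Real.exp_pos _).le
    calc x ^ w.re * |Real.log x| ^ (l + 1) * Real.exp (-z.re * x)
        ≤ (x ^ (a.re - ε) + x ^ (a.re + ε)) * |Real.log x| ^ (l + 1) * Real.exp (-z.re * x) := by
          gcongr
      _ = x ^ (a.re - ε) * |Real.log x| ^ (l + 1) * Real.exp (-z.re * x)
          + x ^ (a.re + ε) * |Real.log x| ^ (l + 1) * Real.exp (-z.re * x) := by ring
  · exact (laplace_aux_integrable _ hp (l + 1) _ hz).add (laplace_aux_integrable _ hq (l + 1) _ hz)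
  · filter_upwards [ae_restrict_mem measurableSet_Ioi] with x hx
    rw [mem_Ioi] at hx
    intro w _
    have hx0 : (x : ℂ) ≠ 0 := Complex.ofReal_ne_zero.2 (ne_of_gt hx)
    have hd : HasDerivAt (fun w : ℂ => (x : ℂ) ^ w)
        ((x : ℂ) ^ w * Complex.log x) w :=
      (hasStrictDerivAt_const_cpow (Or.inl hx0)).hasDerivAt
    have := hd.mul_const ((Real.log x : ℂ) ^ l * Complex.exp (-(z * x)))
    have e : (x : ℂ) ^ w * (Real.log x : ℂ) ^ (l + 1) * Complex.exp (-(z * x))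
        = (x : ℂ) ^ w * Complex.log x * ((Real.log x : ℂ) ^ l * Complex.exp (-(z * x))) := by
      rw [← Complex.ofReal_log hx.le]
      ring
    rw [e]
    exact this.congr_of_eventuallyEq (Filter.Eventually.of_forall fun u => by ring)

lemma laplace_meas0 (w z : ℂ) :
    AEStronglyMeasurable (fun x : ℝ => (x : ℂ) ^ w * Complex.exp (-(z * x)))
      (volume.restrict (Ioi 0)) := by
  have := laplace_meas w z 0
  simpa using this

lemma laplace_integrable0 (w z : ℂ) (hw : -1 < w.re) (hz : 0 < z.re) :
    IntegrableOn (fun x : ℝ => (x : ℂ) ^ w * Complex.exp (-(z * x))) (Ioi 0) := by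
  have := laplace_integrable_integrand w z 0 hw hz
  simpa using this

lemma laplace_hasDerivAt_H (w : ℂ) (hw : -1 < w.re) {z : ℂ} (hz : 0 < z.re) :
    HasDerivAt (fun z : ℂ => ∫ x in Ioi (0:ℝ), (x : ℂ) ^ w * Complex.exp (-(z * x)))
      (∫ x in Ioi (0:ℝ), (x : ℂ) ^ w * (Complex.exp (-(z * x)) * -(x : ℂ))) z := by
  set ε : ℝ := z.re / 2 with hεdef
  have hε0 : 0 < ε := by rw [hεdef]; linarith
  have key := hasDerivAt_integral_of_dominated_loc_of_deriv_le (μ := volume.restrict (Ioi 0))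
    (F := fun (z : ℂ) (x : ℝ) => (x : ℂ) ^ w * Complex.exp (-(z * x)))
    (F' := fun (z : ℂ) (x : ℝ) => (x : ℂ) ^ w * (Complex.exp (-(z * x)) * -(x : ℂ)))
    (x₀ := z) (s := Metric.ball z ε)
    (bound := fun x : ℝ => x ^ (w.re + 1) * Real.exp (-(z.re / 2) * x))
    (Metric.ball_mem_nhds _ hε0) ?_ ?_ ?_ ?_ ?_ ?_
  · exact key.2
  · filter_upwards with ζ using laplace_meas0 w ζ
  · exact laplace_integrable0 w z hw hz
  · refine ((laplace_meas0 w z).mul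
      (Complex.continuous_ofReal.neg.aestronglyMeasurable.restrict)).congr ?_
    filter_upwards with x
    simp only [Pi.mul_apply, Pi.neg_apply]
    ring
  · filter_upwards [ae_restrict_mem measurableSet_Ioi] with x hx
    rw [mem_Ioi] at hx
    intro ζ hζ
    rw [Metric.mem_ball, Complex.dist_eq] at hζ
    have hre : |ζ.re - z.re| < ε := by
      calc |ζ.re - z.re| = |(ζ - z).re| := by rw [Complex.sub_re]
        _ ≤ ‖ζ - z‖ := Complex.abs_re_le_norm _
        _ < ε := hζ
    rw [abs_lt] at hre
    have hζre : z.re / 2 ≤ ζ.re := by rw [hεdef] at hre; linarith [hre.1]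
    have hnorm : ‖(x : ℂ) ^ w * (Complex.exp (-(ζ * x)) * -(x : ℂ))‖
        = x ^ w.re * (Real.exp (-ζ.re * x) * x) := by
      rw [norm_mul, norm_mul, Complex.norm_cpow_eq_rpow_re_of_pos hx, norm_neg, Complex.norm_real, Real.norm_eq_abs,
        _root_.abs_of_pos hx, Complex.norm_exp]
      congr 3
      simp [Complex.neg_re, Complex.mul_re]
    rw [hnorm]
    have hexp : Real.exp (-ζ.re * x) ≤ Real.exp (-(z.re / 2) * x) := by
      apply Real.exp_le_exp.2
      nlinarith
    calc x ^ w.re * (Real.exp (-ζ.re * x) * x)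
        ≤ x ^ w.re * (Real.exp (-(z.re / 2) * x) * x) := by
          exact mul_le_mul_of_nonneg_left (mul_le_mul_of_nonneg_right hexp hx.le)
            (Real.rpow_nonneg hx.le _)
      _ = x ^ (w.re + 1) * Real.exp (-(z.re / 2) * x) := by
          rw [Real.rpow_add hx, Real.rpow_one]; ring
  · have := laplace_aux_integrable (w.re + 1) (by linarith) 0 (z.re / 2) (by linarith)
    simpa [IntegrableOn] using this
  · filter_upwards [ae_restrict_mem measurableSet_Ioi] with x hx
    rw [mem_Ioi] at hx
    intro ζ _
    have h1 : HasDerivAt (fun ζ : ℂ => -(ζ * (x : ℂ))) (-(x : ℂ)) ζ := by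
      exact (hasDerivAt_mul_const (x : ℂ)).neg
    exact (h1.cexp).const_mul ((x : ℂ) ^ w)

lemma laplace_base_real (w : ℂ) (hw : -1 < w.re) {r : ℝ} (hr : 0 < r) :
    ∫ x in Ioi (0:ℝ), (x : ℂ) ^ w * Complex.exp (-((r : ℂ) * x))
      = Complex.Gamma (w + 1) * (r : ℂ) ^ (-w - 1) := by
  have hw1 : 0 < (w + 1).re := by simp only [Complex.add_re, Complex.one_re]; linarith
  have h := Complex.integral_cpow_mul_exp_neg_mul_Ioi hw1 hr
  rw [add_sub_cancel_right] at h
  rw [h]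
  have hr0 : (r : ℂ) ≠ 0 := Complex.ofReal_ne_zero.2 (ne_of_gt hr)
  have harg : Complex.arg (r : ℂ) ≠ Real.pi := by
    rw [Complex.arg_ofReal_of_nonneg hr.le]
    exact (Real.pi_ne_zero).symm
  rw [one_div, Complex.inv_cpow _ _ harg, ← Complex.cpow_neg]
  rw [show -(w + 1) = -w - 1 by ring, mul_comm]

lemma laplace_base (w : ℂ) (hw : -1 < w.re) {z : ℂ} (hz : 0 < z.re) :
    ∫ x in Ioi (0:ℝ), (x : ℂ) ^ w * Complex.exp (-(z * x))
      = Complex.Gamma (w + 1) * z ^ (-w - 1) := by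
  set U : Set ℂ := {z : ℂ | 0 < z.re} with hUdef
  have hUo : IsOpen U := isOpen_lt continuous_const Complex.continuous_re
  have hUc : Convex ℝ U := convex_halfSpace_re_gt 0
  have h1 : AnalyticOnNhd ℂ
      (fun z : ℂ => ∫ x in Ioi (0:ℝ), (x : ℂ) ^ w * Complex.exp (-(z * x))) U := by
    refine DifferentiableOn.analyticOnNhd (fun ζ hζ => ?_) hUo
    exact (laplace_hasDerivAt_H w hw hζ).differentiableAt.differentiableWithinAt
  have h2 : AnalyticOnNhd ℂ (fun z : ℂ => Complex.Gamma (w + 1) * z ^ (-w - 1)) U := by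
    refine DifferentiableOn.analyticOnNhd (fun ζ hζ => ?_) hUo
    refine (DifferentiableAt.const_mul ?_ _).differentiableWithinAt
    exact ((hasDerivAt_id ζ).cpow_const
      (Complex.mem_slitPlane_iff.2 (Or.inl hζ))).differentiableAt
  have hone : (1 : ℂ) ∈ U := by simp [hUdef]
  have hfreq : ∃ᶠ ζ in nhdsWithin (1 : ℂ) {(1:ℂ)}ᶜ,
      (∫ x in Ioi (0:ℝ), (x : ℂ) ^ w * Complex.exp (-(ζ * x)))
        = Complex.Gamma (w + 1) * ζ ^ (-w - 1) := by
    have htend : Tendsto (fun n : ℕ => ((1 + ((n : ℝ) + 1)⁻¹ : ℝ) : ℂ)) atTop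
        (nhdsWithin (1 : ℂ) {(1:ℂ)}ᶜ) := by
      apply tendsto_nhdsWithin_of_tendsto_nhds_of_eventually_within
      · have hr : Tendsto (fun n : ℕ => (1 + ((n : ℝ) + 1)⁻¹ : ℝ)) atTop (nhds 1) := by
          have := tendsto_one_div_add_atTop_nhds_zero_nat (𝕜 := ℝ)
          simp only [one_div] at this
          simpa using tendsto_const_nhds.add this
        have h2 : Tendsto (fun n : ℕ => ((1 + ((n : ℝ) + 1)⁻¹ : ℝ) : ℂ)) atTop
            (nhds ((1 : ℝ) : ℂ)) := (Complex.continuous_ofReal.tendsto (1 : ℝ)).comp hr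
        rw [Complex.ofReal_one] at h2
        exact h2
      · filter_upwards with n
        have hne : (1 : ℝ) + ((n : ℝ) + 1)⁻¹ ≠ 1 := by
          have : (0:ℝ) < ((n : ℝ) + 1)⁻¹ := by positivity
          linarith
        simp only [Set.mem_compl_iff, Set.mem_singleton_iff]
        exact_mod_cast hne
    refine htend.frequently (Filter.Eventually.of_forall (fun n => ?_)).frequently
    have hrpos : (0:ℝ) < 1 + ((n : ℝ) + 1)⁻¹ := by positivity
    exact laplace_base_real w hw hrpos
  have := h1.eqOn_of_preconnected_of_frequently_eq h2 hUc.isPreconnected hone hfreq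
  exact this hz

end LaplaceAux

open Set Filter in
/-- Laplace integral of `x^a (log x)^l`: for `Re a > -1` and `Re z > 0`,
`∫_0^∞ x^a (log x)^l e^{-zx} dx` equals the `l`-th derivative at `a` of
`w ↦ Γ(w+1) z^{-w-1}`. -/
theorem laplace_integral_cpow_log_pow (l : ℕ) (a z : ℂ) (ha : -1 < a.re) (hz : 0 < z.re) :
    ∫ x in Set.Ioi (0 : ℝ), (x : ℂ) ^ a * (Real.log x : ℂ) ^ l * Complex.exp (-(z * x))
      = iteratedDeriv l (fun w : ℂ => Complex.Gamma (w + 1) * z ^ (-w - 1)) a := by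
  induction l generalizing a with
  | zero =>
    simp only [pow_zero, mul_one, iteratedDeriv_zero]
    exact laplace_base a ha hz
  | succ l ih =>
    rw [iteratedDeriv_succ]
    have hopen : IsOpen {w : ℂ | -1 < w.re} := isOpen_lt continuous_const Complex.continuous_re
    have hev : (fun w : ℂ =>
          ∫ x in Ioi (0:ℝ), (x : ℂ) ^ w * (Real.log x : ℂ) ^ l * Complex.exp (-(z * x)))
        =ᶠ[nhds a] iteratedDeriv l (fun w : ℂ => Complex.Gamma (w + 1) * z ^ (-w - 1)) := by
      filter_upwards [hopen.mem_nhds ha] with w hw using ih w hw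
    rw [← hev.deriv_eq]
    exact ((laplace_hasDerivAt_F l z hz ha).deriv).symm
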